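/- For every Hurst parameter H ∈ (0,1/2) there exist constants C > 0 and t₀ ≥ 1 such that for all t ≥ t₀: | 𝒦(t) − t^{H-3/2}/(σ_ou Γ(H−1/2)) | ≤ C · t^{H-5/2}, where Γ(H−1/2) is the value of the Gamma function at H−1/2 ∈ (−1/2,0). (Long-time behavior of the fOU moving-average kernel.) -/

import Mathlib

set_option maxHeartbeats 1000000


open MeasureTheory Real Set

/-- `σ_ou = (2 sin(πH))^{-1/2}`. -/
noncomputable def sigOU (H : ℝ) : ℝ := (2 * Real.sin (Real.pi * H)) ^ (-(1/2) : ℝ)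

/-- The fOU moving-average kernel
`𝒦(t) = (σ_ou Γ(H+1/2))⁻¹ ( t^{H-1/2} − ∫₀^t (t−u)^{H-1/2} e^{-u} du )`. -/
noncomputable def fouKernel (H : ℝ) (t : ℝ) : ℝ :=
  (sigOU H * Real.Gamma (H + 1/2))⁻¹ *
    (t ^ (H - 1/2) - ∫ u in (0 : ℝ)..t, (t - u) ^ (H - 1/2) * Real.exp (-u))

-- FTC exponential integrals
lemma fou_int_exp (x : ℝ) : ∫ u in (0:ℝ)..x, Real.exp (-u) = 1 - Real.exp (-x) := by
  have h : ∀ u ∈ Set.uIcc (0:ℝ) x, HasDerivAt (fun u => -Real.exp (-u)) (Real.exp (-u)) u := by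
    intro u _
    have := (Real.hasDerivAt_exp (-u)).comp u (hasDerivAt_neg u)
    exact this.neg.congr_deriv (by simp)
  have := intervalIntegral.integral_eq_sub_of_hasDerivAt h
    ((Real.continuous_exp.comp continuous_neg).intervalIntegrable 0 x)
  simpa using this

lemma fou_int_u_exp (x : ℝ) :
    ∫ u in (0:ℝ)..x, u * Real.exp (-u) = 1 - Real.exp (-x) * (x + 1) := by
  have h : ∀ u ∈ Set.uIcc (0:ℝ) x,
      HasDerivAt (fun u => -((u+1) * Real.exp (-u))) (u * Real.exp (-u)) u := by
    intro u _
    have he : HasDerivAt (fun u : ℝ => Real.exp (-u)) (-Real.exp (-u)) u := by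
      exact ((Real.hasDerivAt_exp (-u)).comp u (hasDerivAt_neg u)).congr_deriv (by simp)
    have h1 : HasDerivAt (fun u : ℝ => (u+1) * Real.exp (-u))
        (1 * Real.exp (-u) + (u+1) * (-Real.exp (-u))) u :=
      ((hasDerivAt_id u).add_const 1).mul he
    have := h1.neg
    exact this.congr_deriv (by ring)
  have := intervalIntegral.integral_eq_sub_of_hasDerivAt h
    ((continuous_id.mul (Real.continuous_exp.comp continuous_neg)).intervalIntegrable 0 x)
  simp at this
  rw [this]; ring

lemma fou_int_u2_exp (x : ℝ) :
    ∫ u in (0:ℝ)..x, u^2 * Real.exp (-u) = 2 - Real.exp (-x) * (x^2 + 2*x + 2) := by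
  have h : ∀ u ∈ Set.uIcc (0:ℝ) x,
      HasDerivAt (fun u => -((u^2+2*u+2) * Real.exp (-u))) (u^2 * Real.exp (-u)) u := by
    intro u _
    have he : HasDerivAt (fun u : ℝ => Real.exp (-u)) (-Real.exp (-u)) u := by
      exact ((Real.hasDerivAt_exp (-u)).comp u (hasDerivAt_neg u)).congr_deriv (by simp)
    have hp : HasDerivAt (fun u : ℝ => u^2+2*u+2) (2*u + 2) u := by
      have := ((hasDerivAt_pow 2 u).add ((hasDerivAt_id u).const_mul 2)).add_const 2
      simpa using this
    have h1 := (hp.mul he).neg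
    exact h1.congr_deriv (by ring)
  have := intervalIntegral.integral_eq_sub_of_hasDerivAt h
    (((continuous_pow 2).mul (Real.continuous_exp.comp continuous_neg)).intervalIntegrable 0 x)
  simp at this
  rw [this]; ring

-- inner MVT: for p < 0, 0 < x < y :  x^p - y^p ≤ (-p) * x^(p-1) * (y-x)
lemma fou_rpow_mvt {p x y : ℝ} (hp : p < 0) (hx : 0 < x) (hxy : x < y) :
    x ^ p - y ^ p ≤ (-p) * x ^ (p-1) * (y - x) := by
  obtain ⟨c, hc, hceq⟩ := exists_hasDerivAt_eq_slope (fun z => z ^ p)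
    (fun z => p * z ^ (p-1)) hxy
    (by
      apply ContinuousOn.rpow_const continuousOn_id
      intro z hz
      exact Or.inl (ne_of_gt (lt_of_lt_of_le hx hz.1)))
    (fun z hz => Real.hasDerivAt_rpow_const (Or.inl (ne_of_gt (hx.trans hz.1))))
  have hcx : x < c := hc.1
  have hcb : c ^ (p-1) ≤ x ^ (p-1) :=
    Real.rpow_le_rpow_of_nonpos hx hcx.le (by linarith)
  have hyx : (0:ℝ) < y - x := by linarith
  have : x ^ p - y ^ p = -p * c ^ (p-1) * (y - x) := by
    field_simp at hceq
    nlinarith [hceq]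
  rw [this]
  have hpn : (0:ℝ) < -p := by linarith
  have := mul_le_mul_of_nonneg_left hcb hpn.le
  exact mul_le_mul_of_nonneg_right this hyx.le

lemma fou_rpow_mvt_nonneg {p x y : ℝ} (hp : p < 0) (hx : 0 < x) (hxy : x ≤ y) :
    0 ≤ x ^ p - y ^ p := by
  have := Real.rpow_le_rpow_of_nonpos hx hxy hp.le
  linarith

-- pointwise Taylor bound for the integrand, valid on [0, t/2]
lemma fou_phi_bound {a t u : ℝ} (ha0 : a < 0) (ht : 0 < t)
    (hu0 : 0 ≤ u) (hu : u ≤ t / 2) :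
    |t ^ a - (t - u) ^ a - a * t ^ (a-1) * u| ≤ (-a) * (1-a) * (t/2) ^ (a-2) * u^2 := by
  rcases eq_or_lt_of_le hu0 with h | h
  · simp [← h]
  have ht2 : (0:ℝ) < t / 2 := by linarith
  -- derivative of F x = t^a - (t-x)^a - a t^(a-1) x
  have hder : ∀ x ∈ Set.Icc (0:ℝ) u,
      HasDerivAt (fun x => t ^ a - (t - x) ^ a - a * t ^ (a-1) * x)
        (a * (t - x) ^ (a-1) - a * t ^ (a-1)) x := by
    intro x hx
    have htx : (0:ℝ) < t - x := by
      rcases hx with ⟨hx0, hxu⟩; linarith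
    have h1 : HasDerivAt (fun x : ℝ => (t - x) ^ a) (-(a * (t - x) ^ (a-1))) x := by
      have := (Real.hasDerivAt_rpow_const (p := a) (Or.inl htx.ne')).comp x
        ((hasDerivAt_const x t).sub (hasDerivAt_id x))
      exact this.congr_deriv (by ring)
    have h2 : HasDerivAt (fun x : ℝ => a * t ^ (a-1) * x) (a * t ^ (a-1)) x := by
      simpa using (hasDerivAt_id x).const_mul (a * t ^ (a-1))
    have := ((hasDerivAt_const x (t ^ a)).sub h1).sub h2
    exact this.congr_deriv (by ring)
  obtain ⟨c, hc, hceq⟩ := exists_hasDerivAt_eq_slope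
    (fun x => t ^ a - (t - x) ^ a - a * t ^ (a-1) * x)
    (fun x => a * (t - x) ^ (a-1) - a * t ^ (a-1)) h
    (fun x hx => ((hder x hx).continuousAt).continuousWithinAt)
    (fun x hx => hder x (Set.mem_Icc.2 ⟨hx.1.le, hx.2.le⟩))
  have hc0 : 0 < c := hc.1
  have hcu : c < u := hc.2
  have htc : 0 < t - c := by linarith
  have htc2 : t / 2 ≤ t - c := by linarith
  -- value of phi from slope
  have hphi : t ^ a - (t - u) ^ a - a * t ^ (a-1) * u
      = (a * (t - c) ^ (a-1) - a * t ^ (a-1)) * u := by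
    have h0 : t ^ a - (t - 0) ^ a - a * t ^ (a-1) * 0 = 0 := by simp
    rw [h0] at hceq  -- hceq : ... = (F u - 0)/(u - 0)
    field_simp at hceq
    linarith [hceq]
  rw [hphi]
  -- bound |F'(c)|
  have hd1 : 0 ≤ (t - c) ^ (a-1) - t ^ (a-1) :=
    fou_rpow_mvt_nonneg (by linarith) htc (by linarith)
  have hd2 : (t - c) ^ (a-1) - t ^ (a-1) ≤ (1-a) * (t - c) ^ (a-2) * c := by
    have := fou_rpow_mvt (p := a-1) (x := t - c) (y := t) (by linarith) htc (by linarith)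
    calc (t - c) ^ (a-1) - t ^ (a-1) ≤ (-(a-1)) * (t-c) ^ (a-1-1) * (t - (t-c)) := this
      _ = (1-a) * (t - c) ^ (a-2) * c := by ring_nf
  have hd3 : (t - c) ^ (a-2) ≤ (t/2) ^ (a-2) :=
    Real.rpow_le_rpow_of_nonpos ht2 htc2 (by linarith)
  have habs : |a * (t - c) ^ (a-1) - a * t ^ (a-1)|
      = (-a) * ((t - c) ^ (a-1) - t ^ (a-1)) := by
    rw [abs_of_nonpos (by nlinarith)]
    ring
  rw [abs_mul, habs, abs_of_pos h]
  have hna : (0:ℝ) ≤ -a := by linarith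
  have h1a : (0:ℝ) ≤ 1 - a := by linarith
  have key : (-a) * ((t - c) ^ (a-1) - t ^ (a-1)) ≤ (-a) * (1-a) * (t/2) ^ (a-2) * u := by
    have step : (t - c) ^ (a-1) - t ^ (a-1) ≤ (1-a) * (t/2) ^ (a-2) * u := by
      calc (t - c) ^ (a-1) - t ^ (a-1) ≤ (1-a) * (t - c) ^ (a-2) * c := hd2
        _ ≤ (1-a) * (t/2) ^ (a-2) * u := by
            have hmm : (t - c) ^ (a-2) * c ≤ (t/2) ^ (a-2) * u :=
              mul_le_mul hd3 hcu.le hc0.le (Real.rpow_nonneg ht2.le _)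
            calc (1-a) * (t - c) ^ (a-2) * c = (1-a) * ((t - c) ^ (a-2) * c) := by ring
              _ ≤ (1-a) * ((t/2) ^ (a-2) * u) := mul_le_mul_of_nonneg_left hmm h1a
              _ = (1-a) * (t/2) ^ (a-2) * u := by ring
    calc (-a) * ((t - c) ^ (a-1) - t ^ (a-1)) ≤ (-a) * ((1-a) * (t/2) ^ (a-2) * u) :=
        mul_le_mul_of_nonneg_left step hna
      _ = (-a) * (1-a) * (t/2) ^ (a-2) * u := by ring
  calc (-a) * ((t - c) ^ (a-1) - t ^ (a-1)) * u ≤ ((-a) * (1-a) * (t/2) ^ (a-2) * u) * u :=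
      mul_le_mul_of_nonneg_right key hu0
    _ = (-a) * (1-a) * (t/2) ^ (a-2) * u^2 := by ring

lemma fou_integrable_refl {a : ℝ} (t : ℝ) (ha1 : -1 < a) :
    IntervalIntegrable (fun u => (t - u) ^ a) volume 0 t := by
  have h : IntervalIntegrable (fun x : ℝ => x ^ a) volume 0 t :=
    intervalIntegral.intervalIntegrable_rpow' ha1
  have := (h.comp_sub_left t).symm
  simpa using this

lemma fou_tail_integral {a t : ℝ} (ha1 : -1 < a) (ha0 : a < 0) (ht : 0 < t) :
    ∫ u in (t/2)..t, (t - u) ^ a = (t/2) ^ (a+1) / (a+1) := by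
  have h := intervalIntegral.integral_comp_sub_left (a := t/2) (b := t)
    (fun x : ℝ => x ^ a) t
  simp only [sub_self] at h
  rw [h, integral_rpow (Or.inl ha1)]
  rw [Real.zero_rpow (by linarith : a + 1 ≠ 0)]
  ring

lemma fou_exp_decay {t : ℝ} (ht : 1 ≤ t) : Real.exp (-(t/2)) * t^3 ≤ 384 := by
  have ht0 : (0:ℝ) < t := by linarith
  have h4 : (t/2)^4 / 24 ≤ Real.exp (t/2) := by
    have := Real.pow_div_factorial_le_exp (x := t/2) (by linarith) 4
    norm_num [Nat.factorial] at this
    linarith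
  have hE : (0:ℝ) < Real.exp (t/2) := Real.exp_pos _
  rw [Real.exp_neg, inv_mul_le_iff₀ hE]
  -- t^3 ≤ exp(t/2) * 384 ;  t^4 ≤ 384 exp(t/2), t^3 ≤ t^4
  have h34 : t^3 ≤ t^4 := pow_le_pow_right₀ ht (by norm_num)
  nlinarith [h4, h34]

lemma fou_core {a t : ℝ} (ha1 : -(1/2) < a) (ha0 : a < 0) (ht : 1 ≤ t) :
    |(t ^ a - ∫ u in (0:ℝ)..t, (t - u) ^ a * Real.exp (-u)) - a * t ^ (a-1)|
      ≤ 1932 * t ^ (a-2) := by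
  have ha1' : (-1:ℝ) < a := by linarith
  have ht0 : (0:ℝ) < t := by linarith
  have ht2 : (0:ℝ) < t/2 := by linarith
  have h2t : t/2 ≤ t := by linarith
  set φe : ℝ → ℝ := fun u => (t ^ a - (t - u) ^ a - a * t ^ (a-1) * u) * Real.exp (-u)
    with hφe_def
  -- integrability facts
  have hJ : IntervalIntegrable (fun u => (t - u) ^ a * Real.exp (-u)) volume 0 t :=
    (fou_integrable_refl t ha1').mul_continuousOn
      ((Real.continuous_exp.comp continuous_neg).continuousOn)
  have hC1 : IntervalIntegrable (fun u : ℝ => t ^ a * Real.exp (-u)) volume 0 t :=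
    (continuous_const.mul (Real.continuous_exp.comp continuous_neg)).intervalIntegrable 0 t
  have hC2 : IntervalIntegrable (fun u : ℝ => a * t ^ (a-1) * (u * Real.exp (-u))) volume 0 t :=
    (continuous_const.mul (continuous_id.mul
      (Real.continuous_exp.comp continuous_neg))).intervalIntegrable 0 t
  have hfun : φe = fun u : ℝ => t ^ a * Real.exp (-u) - (t - u) ^ a * Real.exp (-u)
      - a * t ^ (a-1) * (u * Real.exp (-u)) := by
    funext u; simp only [hφe_def]; ring
  have hφ : IntervalIntegrable φe volume 0 t := by
    rw [hfun]; exact (hC1.sub hJ).sub hC2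
  -- exact value of ∫₀ᵗ φe
  have hint : ∫ u in (0:ℝ)..t, φe u
      = t ^ a * (1 - Real.exp (-t)) - (∫ u in (0:ℝ)..t, (t - u) ^ a * Real.exp (-u))
        - a * t ^ (a-1) * (1 - Real.exp (-t) * (t + 1)) := by
    rw [hfun, intervalIntegral.integral_sub (hC1.sub hJ) hC2,
      intervalIntegral.integral_sub hC1 hJ,
      intervalIntegral.integral_const_mul, intervalIntegral.integral_const_mul,
      fou_int_exp, fou_int_u_exp]
  -- split point
  have hsub1 : Set.uIcc (0:ℝ) (t/2) ⊆ Set.uIcc (0:ℝ) t := by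
    rw [Set.uIcc_of_le ht2.le, Set.uIcc_of_le ht0.le]
    exact Set.Icc_subset_Icc le_rfl h2t
  have hsub2 : Set.uIcc (t/2) t ⊆ Set.uIcc (0:ℝ) t := by
    rw [Set.uIcc_of_le h2t, Set.uIcc_of_le ht0.le]
    exact Set.Icc_subset_Icc ht2.le le_rfl
  have hφ1 : IntervalIntegrable φe volume 0 (t/2) := hφ.mono_set hsub1
  have hφ2 : IntervalIntegrable φe volume (t/2) t := hφ.mono_set hsub2
  have hsplit : (∫ u in (0:ℝ)..(t/2), φe u) + (∫ u in (t/2)..t, φe u)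
      = ∫ u in (0:ℝ)..t, φe u :=
    intervalIntegral.integral_add_adjacent_intervals hφ1 hφ2
  -- bound on first piece
  set M : ℝ := (-a) * (1-a) * (t/2) ^ (a-2) with hM_def
  have hMnn : 0 ≤ M := by
    have := Real.rpow_nonneg ht2.le (a-2)
    have h1 : (0:ℝ) ≤ -a := by linarith
    have h2 : (0:ℝ) ≤ 1-a := by linarith
    positivity
  have hE1 : |∫ u in (0:ℝ)..(t/2), φe u| ≤ 2 * M := by
    have hb : ∀ x ∈ Set.Icc (0:ℝ) (t/2), |φe x| ≤ M * (x^2 * Real.exp (-x)) := by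
      intro x hx
      have hbd := fou_phi_bound ha0 ht0 hx.1 hx.2
      have : |φe x| = |t ^ a - (t - x) ^ a - a * t ^ (a-1) * x| * Real.exp (-x) := by
        rw [hφe_def, abs_mul, abs_of_pos (Real.exp_pos _)]
      rw [this]
      calc |t ^ a - (t - x) ^ a - a * t ^ (a-1) * x| * Real.exp (-x)
          ≤ (M * x^2) * Real.exp (-x) := by
            apply mul_le_mul_of_nonneg_right _ (Real.exp_pos _).le
            simpa [hM_def, mul_comm, mul_assoc, mul_left_comm] using hbd
        _ = M * (x^2 * Real.exp (-x)) := by ring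
    have h1 : |∫ u in (0:ℝ)..(t/2), φe u| ≤ ∫ u in (0:ℝ)..(t/2), |φe u| :=
      intervalIntegral.abs_integral_le_integral_abs ht2.le
    have h2 : (∫ u in (0:ℝ)..(t/2), |φe u|)
        ≤ ∫ u in (0:ℝ)..(t/2), M * (u^2 * Real.exp (-u)) :=
      intervalIntegral.integral_mono_on ht2.le hφ1.abs
        ((continuous_const.mul ((continuous_pow 2).mul
          (Real.continuous_exp.comp continuous_neg))).intervalIntegrable 0 (t/2)) hb
    have h3 : (∫ u in (0:ℝ)..(t/2), M * (u^2 * Real.exp (-u)))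
        = M * (2 - Real.exp (-(t/2)) * ((t/2)^2 + 2*(t/2) + 2)) := by
      rw [intervalIntegral.integral_const_mul, fou_int_u2_exp]
    have h4 : M * (2 - Real.exp (-(t/2)) * ((t/2)^2 + 2*(t/2) + 2)) ≤ 2 * M := by
      have hpos : 0 ≤ Real.exp (-(t/2)) * ((t/2)^2 + 2*(t/2) + 2) := by positivity
      nlinarith
    linarith [h1, h2, h3.le, h3.ge]
  -- bound on second piece
  have e1 : t ^ a * t = t ^ (a+1) := (Real.rpow_add_one ht0.ne' a).symm
  have e0 : t ^ (a-1) * t = t ^ a := by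
    have := Real.rpow_add_one ht0.ne' (a-1)
    rw [sub_add_cancel] at this
    exact this.symm
  have e2 : t ^ (a-1) * t^2 = t ^ (a+1) := by
    rw [sq, ← mul_assoc, e0, e1]
  have htP : (0:ℝ) ≤ t ^ (a+1) := Real.rpow_nonneg ht0.le _
  have hE2 : |∫ u in (t/2)..t, φe u| ≤ Real.exp (-(t/2)) * (3 * t ^ (a+1)) := by
    have hint2 : IntervalIntegrable (fun u => (t - u) ^ a) volume (t/2) t :=
      (fou_integrable_refl t ha1').mono_set hsub2
    have hcont2 : IntervalIntegrable (fun u : ℝ => t ^ a + (-a) * t ^ (a-1) * u)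
        volume (t/2) t :=
      (continuous_const.add (continuous_const.mul continuous_id)).intervalIntegrable _ _
    have hb : ∀ x ∈ Set.Icc (t/2) t,
        |φe x| ≤ ((t - x) ^ a + (t ^ a + (-a) * t ^ (a-1) * x)) * Real.exp (-(t/2)) := by
      intro x hx
      have hx1 : t/2 ≤ x := hx.1
      have hx2 : x ≤ t := hx.2
      have hxnn : 0 ≤ x := by linarith
      have htxnn : (0:ℝ) ≤ t - x := by linarith
      have hexp : Real.exp (-x) ≤ Real.exp (-(t/2)) := Real.exp_le_exp.2 (by linarith)
      have htan : (0:ℝ) ≤ t ^ a := Real.rpow_nonneg ht0.le _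
      have htxan : (0:ℝ) ≤ (t - x) ^ a := Real.rpow_nonneg htxnn _
      have htan1 : (0:ℝ) ≤ t ^ (a-1) := Real.rpow_nonneg ht0.le _
      have hphi_abs : |t ^ a - (t - x) ^ a - a * t ^ (a-1) * x|
          ≤ (t - x) ^ a + (t ^ a + (-a) * t ^ (a-1) * x) := by
        have h1 : |t ^ a - (t - x) ^ a - a * t ^ (a-1) * x|
            ≤ |t ^ a| + |(t - x) ^ a| + |a * t ^ (a-1) * x| := by
          calc |t ^ a - (t - x) ^ a - a * t ^ (a-1) * x|
              ≤ |t ^ a - (t - x) ^ a| + |a * t ^ (a-1) * x| := abs_sub _ _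
            _ ≤ |t ^ a| + |(t - x) ^ a| + |a * t ^ (a-1) * x| := by
                have := abs_sub (t ^ a) ((t - x) ^ a)
                linarith
        have h2 : |t ^ a| = t ^ a := abs_of_nonneg htan
        have h3 : |(t - x) ^ a| = (t - x) ^ a := abs_of_nonneg htxan
        have h4 : |a * t ^ (a-1) * x| = (-a) * t ^ (a-1) * x := by
          have hx0 : a * t ^ (a-1) * x ≤ 0 := by
            rw [mul_assoc]
            exact mul_nonpos_iff.2 (Or.inr ⟨ha0.le, mul_nonneg htan1 hxnn⟩)
          rw [abs_of_nonpos hx0]; ring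
        rw [h2, h3, h4] at h1
        linarith
      have hnn : (0:ℝ) ≤ (t - x) ^ a + (t ^ a + (-a) * t ^ (a-1) * x) := by
        have hna : (0:ℝ) ≤ -a := by linarith
        have := mul_nonneg (mul_nonneg hna htan1) hxnn
        linarith
      calc |φe x| = |t ^ a - (t - x) ^ a - a * t ^ (a-1) * x| * Real.exp (-x) := by
            rw [hφe_def, abs_mul, abs_of_pos (Real.exp_pos _)]
        _ ≤ ((t - x) ^ a + (t ^ a + (-a) * t ^ (a-1) * x)) * Real.exp (-x) :=
            mul_le_mul_of_nonneg_right hphi_abs (Real.exp_pos _).le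
        _ ≤ ((t - x) ^ a + (t ^ a + (-a) * t ^ (a-1) * x)) * Real.exp (-(t/2)) :=
            mul_le_mul_of_nonneg_left hexp hnn
    have h1 : |∫ u in (t/2)..t, φe u| ≤ ∫ u in (t/2)..t, |φe u| :=
      intervalIntegral.abs_integral_le_integral_abs h2t
    have h2 : (∫ u in (t/2)..t, |φe u|)
        ≤ ∫ u in (t/2)..t, ((t - u) ^ a + (t ^ a + (-a) * t ^ (a-1) * u)) * Real.exp (-(t/2)) :=
      intervalIntegral.integral_mono_on h2t hφ2.abs
        ((hint2.add hcont2).mul_continuousOn continuous_const.continuousOn) hb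
    have hlin : (∫ x in (t/2)..t, (t ^ a + (-a) * t ^ (a-1) * x))
        = (t ^ a * t + (-a) * t ^ (a-1) * t^2/2)
          - (t ^ a * (t/2) + (-a) * t ^ (a-1) * (t/2)^2/2) := by
      refine intervalIntegral.integral_eq_sub_of_hasDerivAt
        (f := fun x : ℝ => t ^ a * x + (-a) * t ^ (a-1) * x^2/2) ?_ ?_
      · intro x _
        have h1 := (hasDerivAt_id x).const_mul (t ^ a)
        have h2 := ((hasDerivAt_pow 2 x).const_mul ((-a) * t ^ (a-1))).div_const 2
        have := h1.add h2
        exact this.congr_deriv (by norm_num; ring)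
      · exact hcont2
    have h3 : (∫ u in (t/2)..t, ((t - u) ^ a + (t ^ a + (-a) * t ^ (a-1) * u)) * Real.exp (-(t/2)))
        = ((t/2) ^ (a+1) / (a+1)
            + (t ^ a * (t - t/2) + (-a) * t ^ (a-1) * ((t^2 - (t/2)^2)/2))) * Real.exp (-(t/2)) := by
      rw [intervalIntegral.integral_mul_const,
        intervalIntegral.integral_add hint2 hcont2, fou_tail_integral ha1' ha0 ht0, hlin]
      congr 2
      ring
    have hX : (t/2) ^ (a+1) / (a+1) ≤ 2 * t ^ (a+1) := by
      have hle : (t/2) ^ (a+1) ≤ t ^ (a+1) :=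
        Real.rpow_le_rpow ht2.le h2t (by linarith)
      rw [div_le_iff₀ (by linarith : (0:ℝ) < a+1)]
      have h2a : t ^ (a+1) ≤ 2 * t ^ (a+1) * (a+1) := by nlinarith [htP]
      linarith
    have hY : t ^ a * (t - t/2) + (-a) * t ^ (a-1) * ((t^2 - (t/2)^2)/2) ≤ t ^ (a+1) := by
      have hexpand : t ^ a * (t - t/2) + (-a) * t ^ (a-1) * ((t^2 - (t/2)^2)/2)
          = (1/2) * (t ^ a * t) + (-a) * (3/8) * (t ^ (a-1) * t^2) := by ring
      rw [hexpand, e1, e2]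
      nlinarith [htP]
    have h4 : ((t/2) ^ (a+1) / (a+1)
            + (t ^ a * (t - t/2) + (-a) * t ^ (a-1) * ((t^2 - (t/2)^2)/2))) * Real.exp (-(t/2))
        ≤ Real.exp (-(t/2)) * (3 * t ^ (a+1)) := by
      have hEnn : (0:ℝ) < Real.exp (-(t/2)) := Real.exp_pos _
      calc ((t/2) ^ (a+1) / (a+1)
            + (t ^ a * (t - t/2) + (-a) * t ^ (a-1) * ((t^2 - (t/2)^2)/2))) * Real.exp (-(t/2))
          ≤ (3 * t ^ (a+1)) * Real.exp (-(t/2)) :=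
            mul_le_mul_of_nonneg_right (by linarith [hX, hY]) hEnn.le
        _ = Real.exp (-(t/2)) * (3 * t ^ (a+1)) := by ring
    exact h1.trans ((h2.trans_eq h3).trans h4)
  -- remaining exponential terms
  have hD : (t ^ a - ∫ u in (0:ℝ)..t, (t - u) ^ a * Real.exp (-u)) - a * t ^ (a-1)
      = (∫ u in (0:ℝ)..(t/2), φe u) + (∫ u in (t/2)..t, φe u)
        + t ^ a * Real.exp (-t) - a * t ^ (a-1) * (Real.exp (-t) * (t+1)) := by
    rw [hsplit, hint]; ring
  have hT : t ^ a * Real.exp (-t) + (-a) * t ^ (a-1) * (Real.exp (-t) * (t+1))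
      ≤ Real.exp (-(t/2)) * (2 * t ^ (a+1)) := by
    have hexp : Real.exp (-t) ≤ Real.exp (-(t/2)) := Real.exp_le_exp.2 (by linarith)
    have hta : t ^ a ≤ t ^ (a+1) := Real.rpow_le_rpow_of_exponent_le ht (by linarith)
    have htan1 : (0:ℝ) ≤ t ^ (a-1) := Real.rpow_nonneg ht0.le _
    have htan : (0:ℝ) ≤ t ^ a := Real.rpow_nonneg ht0.le _
    have h1 : t ^ (a-1) * (t+1) ≤ 2 * t ^ (a+1) := by
      have : t ^ (a-1) * (t+1) ≤ t ^ (a-1) * (2*t) :=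
        mul_le_mul_of_nonneg_left (by linarith) htan1
      calc t ^ (a-1) * (t+1) ≤ t ^ (a-1) * (2*t) := this
        _ = 2 * (t ^ (a-1) * t) := by ring
        _ = 2 * t ^ a := by rw [e0]
        _ ≤ 2 * t ^ (a+1) := by linarith
    have hna2 : -a ≤ 1/2 := by linarith
    have t1 : t ^ a * Real.exp (-t) ≤ t ^ (a+1) * Real.exp (-(t/2)) :=
      mul_le_mul hta hexp (Real.exp_pos _).le htP
    have hinner : t ^ (a-1) * (Real.exp (-t) * (t+1)) ≤ 2 * t ^ (a+1) * Real.exp (-(t/2)) := by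
      calc t ^ (a-1) * (Real.exp (-t) * (t+1)) = (t ^ (a-1) * (t+1)) * Real.exp (-t) := by ring
        _ ≤ (2 * t ^ (a+1)) * Real.exp (-(t/2)) :=
            mul_le_mul h1 hexp (Real.exp_pos _).le (by linarith [htP])
        _ = 2 * t ^ (a+1) * Real.exp (-(t/2)) := by ring
    have hinner_nn : 0 ≤ t ^ (a-1) * (Real.exp (-t) * (t+1)) :=
      mul_nonneg htan1 (mul_nonneg (Real.exp_pos _).le (by linarith))
    have t2 : (-a) * (t ^ (a-1) * (Real.exp (-t) * (t+1)))
        ≤ (1/2) * (2 * t ^ (a+1) * Real.exp (-(t/2))) :=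
      mul_le_mul hna2 hinner hinner_nn (by norm_num)
    calc t ^ a * Real.exp (-t) + (-a) * t ^ (a-1) * (Real.exp (-t) * (t+1))
        = t ^ a * Real.exp (-t) + (-a) * (t ^ (a-1) * (Real.exp (-t) * (t+1))) := by ring
      _ ≤ t ^ (a+1) * Real.exp (-(t/2)) + (1/2) * (2 * t ^ (a+1) * Real.exp (-(t/2))) :=
          add_le_add t1 t2
      _ = Real.exp (-(t/2)) * (2 * t ^ (a+1)) := by ring
  -- combine everything
  have hMle : 2 * M ≤ 12 * t ^ (a-2) := by
    have h8 : (1:ℝ)/8 ≤ (2:ℝ) ^ (a-2) := by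
      have h23 : (2:ℝ) ^ (-3:ℝ) = 1/8 := by
        rw [show (-3:ℝ) = ((-3 : ℤ) : ℝ) by norm_num, Real.rpow_intCast]
        norm_num
      rw [← h23]
      exact Real.rpow_le_rpow_of_exponent_le one_le_two (by linarith)
    have hdiv : (t/2) ^ (a-2) = t ^ (a-2) / (2:ℝ) ^ (a-2) :=
      Real.div_rpow ht0.le (by norm_num) _
    have htnn : (0:ℝ) ≤ t ^ (a-2) := Real.rpow_nonneg ht0.le _
    have hhalf : (t/2) ^ (a-2) ≤ 8 * t ^ (a-2) := by
      rw [hdiv]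
      calc t ^ (a-2) / (2:ℝ) ^ (a-2) ≤ t ^ (a-2) / (1/8) :=
          div_le_div_of_nonneg_left htnn (by norm_num) h8
        _ = 8 * t ^ (a-2) := by ring
    have hna : (0:ℝ) ≤ -a := by linarith
    have hna2 : -a ≤ 1/2 := by linarith
    have h1a : (0:ℝ) ≤ 1-a := by linarith
    have h1a2 : 1-a ≤ 3/2 := by linarith
    have hPnn : (0:ℝ) ≤ (t/2) ^ (a-2) := Real.rpow_nonneg ht2.le _
    have hprod : (-a) * (1-a) ≤ 3/4 := by
      have := mul_le_mul hna2 h1a2 h1a (by norm_num : (0:ℝ) ≤ 1/2)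
      linarith
    have hprod_nn : 0 ≤ (-a) * (1-a) := mul_nonneg hna h1a
    have : M ≤ (3/4) * (8 * t ^ (a-2)) := by
      rw [hM_def, mul_assoc]
      calc (-a) * ((1-a) * (t/2) ^ (a-2)) = ((-a) * (1-a)) * (t/2) ^ (a-2) := by ring
        _ ≤ (3/4) * (8 * t ^ (a-2)) := mul_le_mul hprod hhalf hPnn (by norm_num)
    linarith
  have hP3 : Real.exp (-(t/2)) * t ^ (a+1) ≤ 384 * t ^ (a-2) := by
    have ht3 : t ^ (a+1) = t ^ (a-2) * t^3 := by
      have h1 : t ^ ((a-2) + (3:ℝ)) = t ^ (a-2) * t ^ (3:ℝ) := Real.rpow_add ht0 _ _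
      have h2 : t ^ (3:ℝ) = t ^ (3:ℕ) := by
        rw [show (3:ℝ) = ((3:ℕ):ℝ) by norm_num, Real.rpow_natCast]
      rw [show a + 1 = (a-2) + (3:ℝ) by ring, h1, h2]
    rw [ht3]
    have := fou_exp_decay ht
    have htnn : (0:ℝ) ≤ t ^ (a-2) := Real.rpow_nonneg ht0.le _
    calc Real.exp (-(t/2)) * (t ^ (a-2) * t^3)
        = t ^ (a-2) * (Real.exp (-(t/2)) * t^3) := by ring
      _ ≤ t ^ (a-2) * 384 := mul_le_mul_of_nonneg_left this htnn
      _ = 384 * t ^ (a-2) := by ring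
  rw [hD]
  have hstep : |(∫ u in (0:ℝ)..(t/2), φe u) + (∫ u in (t/2)..t, φe u)
        + t ^ a * Real.exp (-t) - a * t ^ (a-1) * (Real.exp (-t) * (t+1))|
      ≤ |∫ u in (0:ℝ)..(t/2), φe u| + |∫ u in (t/2)..t, φe u|
        + t ^ a * Real.exp (-t) + (-a) * t ^ (a-1) * (Real.exp (-t) * (t+1)) := by
    have habs1 := abs_sub ((∫ u in (0:ℝ)..(t/2), φe u) + (∫ u in (t/2)..t, φe u)
        + t ^ a * Real.exp (-t)) (a * t ^ (a-1) * (Real.exp (-t) * (t+1)))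
    have habs2 := abs_add_le ((∫ u in (0:ℝ)..(t/2), φe u) + (∫ u in (t/2)..t, φe u))
        (t ^ a * Real.exp (-t))
    have habs3 := abs_add_le (∫ u in (0:ℝ)..(t/2), φe u) (∫ u in (t/2)..t, φe u)
    have h4 : |t ^ a * Real.exp (-t)| = t ^ a * Real.exp (-t) := by
      apply abs_of_nonneg
      exact mul_nonneg (Real.rpow_nonneg ht0.le _) (Real.exp_pos _).le
    have h5 : |a * t ^ (a-1) * (Real.exp (-t) * (t+1))|
        = (-a) * t ^ (a-1) * (Real.exp (-t) * (t+1)) := by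
      have h6 : (0:ℝ) ≤ t ^ (a-1) * (Real.exp (-t) * (t+1)) := by
        apply mul_nonneg (Real.rpow_nonneg ht0.le _)
        apply mul_nonneg (Real.exp_pos _).le (by linarith)
      have h7 : a * t ^ (a-1) * (Real.exp (-t) * (t+1)) ≤ 0 := by
        rw [mul_assoc]
        exact mul_nonpos_iff.2 (Or.inr ⟨ha0.le, h6⟩)
      rw [abs_of_nonpos h7]; ring
    rw [h4] at habs2
    rw [h5] at habs1
    linarith
  calc |(∫ u in (0:ℝ)..(t/2), φe u) + (∫ u in (t/2)..t, φe u)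
        + t ^ a * Real.exp (-t) - a * t ^ (a-1) * (Real.exp (-t) * (t+1))|
      ≤ |∫ u in (0:ℝ)..(t/2), φe u| + |∫ u in (t/2)..t, φe u|
        + t ^ a * Real.exp (-t) + (-a) * t ^ (a-1) * (Real.exp (-t) * (t+1)) := hstep
    _ ≤ 2*M + Real.exp (-(t/2)) * (3 * t ^ (a+1)) + Real.exp (-(t/2)) * (2 * t ^ (a+1)) := by
        have := hT
        linarith [hE1, hE2]
    _ = 2*M + 5 * (Real.exp (-(t/2)) * t ^ (a+1)) := by ring
    _ ≤ 12 * t ^ (a-2) + 5 * (384 * t ^ (a-2)) := by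
        have h5 := mul_le_mul_of_nonneg_left hP3 (by norm_num : (0:ℝ) ≤ 5)
        linarith [hMle]
    _ = 1932 * t ^ (a-2) := by ring

/-- Long-time behavior of the fOU moving-average kernel: for every `H ∈ (0,1/2)`
there exist `C > 0` and `t₀ ≥ 1` such that for all `t ≥ t₀`,
`| 𝒦(t) − t^{H-3/2}/(σ_ou Γ(H−1/2)) | ≤ C t^{H-5/2}`,
with `Γ(H−1/2)` the Gamma function at `H−1/2 ∈ (−1/2,0)`. -/
theorem fouKernel_longTime (H : ℝ) (hH : H ∈ Set.Ioo (0 : ℝ) (1/2)) :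
    ∃ C > (0 : ℝ), ∃ t₀ ≥ (1 : ℝ), ∀ t ≥ t₀,
      |fouKernel H t - t ^ (H - 3/2) / (sigOU H * Real.Gamma (H - 1/2))|
        ≤ C * t ^ (H - 5/2) := by
  obtain ⟨hH0, hH2⟩ := hH
  have hsin : 0 < Real.sin (Real.pi * H) :=
    Real.sin_pos_of_pos_of_lt_pi (by positivity) (by nlinarith [Real.pi_pos])
  have hσ : 0 < sigOU H := Real.rpow_pos_of_pos (by linarith) _
  have hΓp : 0 < Real.Gamma (H + 1/2) := Real.Gamma_pos_of_pos (by linarith)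
  have hc : 0 < sigOU H * Real.Gamma (H + 1/2) := mul_pos hσ hΓp
  have haddone : Real.Gamma (H + 1/2) = (H - 1/2) * Real.Gamma (H - 1/2) := by
    have h := Real.Gamma_add_one (show H - 1/2 ≠ 0 by linarith)
    rw [show H - 1/2 + 1 = H + 1/2 by ring] at h
    exact h
  have hΓm_ne : Real.Gamma (H - 1/2) ≠ 0 := by
    intro h0
    rw [h0, mul_zero] at haddone
    exact hΓp.ne' haddone
  refine ⟨1932 / (sigOU H * Real.Gamma (H + 1/2)), div_pos (by norm_num) hc, 1, le_refl 1, ?_⟩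
  intro t ht
  have hcore := fou_core (a := H - 1/2) (t := t) (by linarith) (by linarith) ht
  have hne : H - 1/2 ≠ 0 := by linarith
  have hrw : (sigOU H * Real.Gamma (H + 1/2))⁻¹ * (H - 1/2)
      = (sigOU H * Real.Gamma (H - 1/2))⁻¹ := by
    rw [haddone,
      show sigOU H * ((H - 1/2) * Real.Gamma (H - 1/2))
        = (H - 1/2) * (sigOU H * Real.Gamma (H - 1/2)) by ring,
      mul_inv, mul_comm ((H - 1/2)⁻¹) _, mul_assoc, inv_mul_cancel₀ hne, mul_one]
  have hKey : fouKernel H t - t ^ (H - 3/2) / (sigOU H * Real.Gamma (H - 1/2))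
      = (sigOU H * Real.Gamma (H + 1/2))⁻¹ *
        ((t ^ (H - 1/2) - ∫ u in (0:ℝ)..t, (t - u) ^ (H - 1/2) * Real.exp (-u))
          - (H - 1/2) * t ^ (H - 1/2 - 1)) := by
    rw [fouKernel, show H - 1/2 - 1 = H - 3/2 by ring,
      div_eq_mul_inv (t ^ (H - 3/2)) (sigOU H * Real.Gamma (H - 1/2)), ← hrw]
    ring
  rw [hKey, abs_mul, abs_of_pos (inv_pos.2 hc)]
  calc (sigOU H * Real.Gamma (H + 1/2))⁻¹ *
        |(t ^ (H - 1/2) - ∫ u in (0:ℝ)..t, (t - u) ^ (H - 1/2) * Real.exp (-u))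
          - (H - 1/2) * t ^ (H - 1/2 - 1)|
      ≤ (sigOU H * Real.Gamma (H + 1/2))⁻¹ * (1932 * t ^ (H - 1/2 - 2)) := by
        exact mul_le_mul_of_nonneg_left hcore (inv_pos.2 hc).le
    _ = 1932 / (sigOU H * Real.Gamma (H + 1/2)) * t ^ (H - 5/2) := by
        rw [show H - 1/2 - 2 = H - 5/2 by ring]
        ring
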